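/- If C ≥ 1 − α (equivalently, the inflection point C/(1−α) is at least 1), then the wealth-update map f has exactly one fixed point: there exists a unique x ∈ ℝ with f(x) = x, and this x lies in the open interval (0,1). In particular, α < 1 − C is a necessary condition for f to have more than one fixed point. -/

import Mathlib

open Real MeasureTheory Set

/-- if `C ≥ 1 - α` (the inflection point `C/(1-α)` is at least 1), then the
wealth-update map `f` has exactly one fixed point, and it lies in `(0, 1)`. In particular,
`α < 1 - C` is necessary for more than one fixed point. -/
theorem unique_fixed_point_of_late_inflection
    (γ σ C α : ℝ) (hγ : 0 < γ) (hσ : 0 < σ) (hα : α ∈ Set.Ico (0 : ℝ) 1)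
    (Φ : ℝ → ℝ)
    (hΦ : ∀ u, Φ u = ∫ t in Set.Iic u, (Real.sqrt (2 * π))⁻¹ * Real.exp (-t ^ 2 / 2))
    (K : ℝ) (hK : K = Real.sqrt (γ ^ 2 + σ ^ 2) / (α * γ ^ 2 + (1 - α) * σ ^ 2))
    (f : ℝ → ℝ) (hf : f = fun x => 1 - Φ (K * (C - (1 - α) * x)))
    (hC : C ≥ 1 - α) :
    ∃ x : ℝ, f x = x ∧ x ∈ Set.Ioo (0 : ℝ) 1 ∧ ∀ y : ℝ, f y = y → y = x := by
  obtain ⟨hα0, hα1⟩ := hα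
  have h1α : (0:ℝ) < 1 - α := by linarith
  set φ : ℝ → ℝ := fun t => (Real.sqrt (2 * π))⁻¹ * Real.exp (-t ^ 2 / 2) with hφ
  have hφpos : ∀ t, 0 < φ t := by
    intro t
    apply mul_pos (inv_pos.2 (Real.sqrt_pos.2 (by positivity))) (Real.exp_pos _)
  have hφcont : Continuous φ := by
    apply Continuous.mul continuous_const
    exact Real.continuous_exp.comp (by continuity)
  have hφint : Integrable φ := by
    have : Integrable (fun t : ℝ => Real.exp (-(1/2) * t ^ 2)) := integrable_exp_neg_mul_sq (by norm_num)
    apply Integrable.const_mul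
    convert this using 2 with t
    ring_nf
  -- total mass 1
  have htotal : ∫ t, φ t = 1 := by
    have h := integral_gaussian (1/2)
    have : ∫ t : ℝ, Real.exp (-t ^ 2 / 2) = Real.sqrt (2 * π) := by
      rw [show (Real.sqrt (2*π)) = Real.sqrt (π / (1/2)) by rw [mul_comm]; norm_num, ← h]
      congr 1 with t; ring_nf
    rw [hφ, integral_const_mul, this]
    rw [inv_mul_cancel₀ (by positivity)]
  -- K positive
  have hKpos : 0 < K := by
    rw [hK]
    apply div_pos (Real.sqrt_pos.2 (by positivity))
    nlinarith [mul_nonneg hα0 (pow_pos hγ 2).le, mul_pos h1α (pow_pos hσ 2)]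
  -- Φ bounds
  have hΦpos : ∀ u, 0 < Φ u := by
    intro u
    rw [hΦ u]
    refine (setIntegral_pos_iff_support_of_nonneg_ae ?_ hφint.integrableOn).2 ?_
    · filter_upwards with t using (hφpos t).le
    · have hsupp : Function.support φ ∩ Iic u = Iic u := by
        rw [Set.inter_eq_right]; exact fun t _ => (hφpos t).ne'
      rw [hsupp]; simp [Real.volume_Iic]
  have hΦlt1 : ∀ u, Φ u < 1 := by
    intro u
    have hsplit : (∫ t in Iic u, φ t) + ∫ t in Ioi u, φ t = ∫ t, φ t :=
      intervalIntegral.integral_Iic_add_Ioi hφint.integrableOn hφint.integrableOn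
    have hpos : 0 < ∫ t in Ioi u, φ t := by
      refine (setIntegral_pos_iff_support_of_nonneg_ae ?_ hφint.integrableOn).2 ?_
      · filter_upwards with t using (hφpos t).le
      · have hsupp : Function.support φ ∩ Ioi u = Ioi u := by
          rw [Set.inter_eq_right]; exact fun t _ => (hφpos t).ne'
        rw [hsupp]; simp [Real.volume_Ioi]
    rw [hΦ u]
    rw [htotal] at hsplit
    linarith
  -- Φ has derivative φ
  have hΦderiv : ∀ u, HasDerivAt Φ (φ u) u := by
    intro u
    have hrepr : ∀ v, Φ v = Φ 0 + ∫ t in (0:ℝ)..v, φ t := by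
      intro v
      rw [hΦ v, hΦ 0, ← intervalIntegral.integral_Iic_sub_Iic hφint.integrableOn hφint.integrableOn]
      ring
    have hd : HasDerivAt (fun v => Φ 0 + ∫ t in (0:ℝ)..v, φ t) (φ u) u := by
      apply HasDerivAt.const_add
      exact intervalIntegral.integral_hasDerivAt_right hφint.intervalIntegrable
        hφcont.aestronglyMeasurable.stronglyMeasurableAtFilter hφcont.continuousAt
    exact hd.congr_of_eventuallyEq (Filter.Eventually.of_forall fun v => hrepr v)
  -- f derivative
  have hfderiv : ∀ x, HasDerivAt f (K * (1 - α) * φ (K * (C - (1 - α) * x))) x := by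
    intro x
    have hinner : HasDerivAt (fun x : ℝ => K * (C - (1 - α) * x)) (K * -(1 - α)) x := by
      apply HasDerivAt.const_mul
      simpa using ((hasDerivAt_id x).const_mul (1 - α)).const_sub C
    have : HasDerivAt (fun x => 1 - Φ (K * (C - (1 - α) * x))) (-(φ (K * (C - (1 - α) * x)) * (K * -(1 - α)))) x :=
      ((hΦderiv (K * (C - (1 - α) * x))).comp x hinner).const_sub 1
    rw [hf]
    convert this using 1
    ring
  have hfcont : Continuous f :=
    continuous_iff_continuousAt.2 fun x => (hfderiv x).continuousAt
  set g : ℝ → ℝ := fun x => f x - x with hg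
  have hgderiv : ∀ x, HasDerivAt g (K * (1 - α) * φ (K * (C - (1 - α) * x)) - 1) x :=
    fun x => (hfderiv x).sub (hasDerivAt_id x)
  have hgderiv' : ∀ x, deriv g x = K * (1 - α) * φ (K * (C - (1 - α) * x)) - 1 :=
    fun x => (hgderiv x).deriv
  have hgcont : Continuous g := hfcont.sub continuous_id
  -- convexity of g on Iic 1
  have hconv : ConvexOn ℝ (Iic (1:ℝ)) g := by
    apply MonotoneOn.convexOn_of_deriv (convex_Iic 1) hgcont.continuousOn
      (fun x _ => (hgderiv x).differentiableAt.differentiableWithinAt)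
    rw [interior_Iic]
    intro x1 h1 x2 h2 h12
    rw [hgderiv', hgderiv']
    have harg2 : 0 ≤ K * (C - (1 - α) * x2) := by
      apply mul_nonneg hKpos.le
      have : (1 - α) * x2 ≤ 1 - α := by nlinarith [mem_Iio.1 h2]
      linarith
    have harg : K * (C - (1 - α) * x2) ≤ K * (C - (1 - α) * x1) := by
      apply mul_le_mul_of_nonneg_left _ hKpos.le
      nlinarith
    have hφle : φ (K * (C - (1 - α) * x1)) ≤ φ (K * (C - (1 - α) * x2)) := by
      apply mul_le_mul_of_nonneg_left _ (by positivity)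
      apply Real.exp_le_exp.2
      nlinarith
    nlinarith [mul_le_mul_of_nonneg_left hφle (mul_nonneg hKpos.le h1α.le)]
  -- boundary values
  have hg0 : 0 < g 0 := by
    simp only [hg, hf, sub_zero]
    have := hΦlt1 (K * (C - (1 - α) * 0))
    linarith
  have hg1 : g 1 < 0 := by
    simp only [hg, hf]
    have := hΦpos (K * (C - (1 - α) * 1))
    linarith
  -- existence via IVT
  have hmem : (0:ℝ) ∈ Ioo (g 1) (g 0) := ⟨hg1, hg0⟩
  obtain ⟨x, hx01, hgx⟩ := intermediate_value_Ioo' zero_le_one hgcont.continuousOn hmem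
  -- fixed points lie in (0,1)
  have hfp_mem : ∀ y, f y = y → y ∈ Ioo (0:ℝ) 1 := by
    intro y hy
    have h1 := hΦpos (K * (C - (1 - α) * y))
    have h2 := hΦlt1 (K * (C - (1 - α) * y))
    have : f y = 1 - Φ (K * (C - (1 - α) * y)) := by rw [hf]
    constructor <;> [linarith [hy ▸ this]; linarith [hy ▸ this]]
  -- no two distinct roots of g in (0,1)
  have huniq : ∀ a b : ℝ, g a = 0 → g b = 0 → a ∈ Ioo (0:ℝ) 1 → b ∈ Ioo (0:ℝ) 1 →
      a < b → False := by
    intro a b hga hgb ha hb hab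
    have ha1 : a < 1 := ha.2
    have hb1 : b < 1 := hb.2
    have hden : (0:ℝ) < 1 - a := by linarith
    set lam : ℝ := (1 - b) / (1 - a) with hlam
    set mu : ℝ := (b - a) / (1 - a) with hmu
    have hlamnn : 0 ≤ lam := div_nonneg (by linarith) (by linarith)
    have hmupos : 0 < mu := by
      apply div_pos <;> linarith
    have hsum : lam + mu = 1 := by
      rw [hlam, hmu]; field_simp
      ring
    have hcomb : lam • a + mu • 1 = b := by
      rw [smul_eq_mul, smul_eq_mul, hlam, hmu]
      field_simp
      ring
    have := hconv.2 (mem_Iic.2 ha1.le) (mem_Iic.2 le_rfl) hlamnn hmupos.le hsum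
    rw [hcomb, hga, hgb] at this
    rw [smul_zero, smul_eq_mul] at this
    nlinarith [mul_pos hmupos (neg_pos.2 hg1)]
  have hfx : f x = x := by
    have : f x - x = 0 := hgx
    linarith
  refine ⟨x, hfx, hx01, fun y hy => ?_⟩
  have hymem := hfp_mem y hy
  have hgy : g y = 0 := by simp [hg, hy]
  rcases lt_trichotomy y x with h | h | h
  · exact absurd (huniq y x hgy hgx hymem hx01 h) (fun h => h)
  · exact h
  · exact absurd (huniq x y hgx hgy hx01 hymem h) (fun h => h)
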